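/- Let K ⊆ F be differential fields and y_1, …, y_n ∈ F nonzero with y_i' = a_i y_i for a_i ∈ K. If no nontrivial monomial u = y_1^{k_1}⋯y_n^{k_n} (k_i ∈ ℤ, not all zero) belongs to K, then y_1, …, y_n are algebraically independent over K. -/

import Mathlib

set_option linter.unusedSectionVars false

section Aux
variable {F : Type*} [Field F] (dF : F → F)
variable (hFadd : ∀ a b, dF (a + b) = dF a + dF b)
variable (hFmul : ∀ a b, dF (a * b) = dF a * b + a * dF b)
include hFadd hFmul

theorem aux_d_zero : dF 0 = 0 := by
  have h := hFadd 0 0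
  rw [add_zero] at h
  exact (left_eq_add.mp h)

theorem aux_d_one : dF 1 = 0 := by
  have h := hFmul 1 1
  rw [mul_one, mul_one, one_mul] at h
  exact (left_eq_add.mp h)

theorem aux_d_sum {ι : Type*} (s : Finset ι) (f : ι → F) :
    dF (∑ i ∈ s, f i) = ∑ i ∈ s, dF (f i) := by
  classical
  induction s using Finset.induction with
  | empty => simpa using aux_d_zero dF hFadd hFmul
  | insert _ _ h ih => rw [Finset.sum_insert h, Finset.sum_insert h, hFadd, ih]

theorem aux_d_pow (x α : F) (h : dF x = α * x) (j : ℕ) :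
    dF (x ^ j) = (j : F) * α * x ^ j := by
  induction j with
  | zero => simpa using aux_d_one dF hFadd hFmul
  | succ j ih =>
      rw [pow_succ, hFmul, ih, h]
      push_cast
      ring

theorem aux_d_prod {ι : Type*} (s : Finset ι) (x α : ι → F)
    (h : ∀ i ∈ s, dF (x i) = α i * x i) :
    dF (∏ i ∈ s, x i) = (∑ i ∈ s, α i) * ∏ i ∈ s, x i := by
  classical
  induction s using Finset.induction with
  | empty => simpa using aux_d_one dF hFadd hFmul
  | @insert j s hj ih =>
      rw [Finset.prod_insert hj, hFmul, ih (fun i hi => h i (Finset.mem_insert_of_mem hi)),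
        h j (Finset.mem_insert_self j s), Finset.sum_insert hj]
      ring

theorem aux_d_inv (w γ : F) (hw : w ≠ 0) (h : dF w = γ * w) :
    dF w⁻¹ = -γ * w⁻¹ := by
  have h1 : dF (w * w⁻¹) = 0 := by rw [mul_inv_cancel₀ hw]; exact aux_d_one dF hFadd hFmul
  rw [hFmul, h, mul_assoc, mul_inv_cancel₀ hw, mul_one] at h1
  apply mul_left_cancel₀ hw
  rw [show w * (-γ * w⁻¹) = -(γ * (w * w⁻¹)) from by ring, mul_inv_cancel₀ hw, mul_one]
  linear_combination h1

end Aux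

/-- If `y₁, …, yₙ ∈ F` are nonzero with `yᵢ' = aᵢ yᵢ`, `aᵢ ∈ K`, and no nontrivial monomial
`y₁^{k₁}⋯yₙ^{kₙ}` (integer exponents, not all zero) belongs to `K`, then `y₁, …, yₙ` are
algebraically independent over `K`. -/
theorem exp_integrals_algebraically_independent
    {K F : Type*} [Field K] [Field F] [CharZero K] [Algebra K F]
    (dK : K → K) (dF : F → F)
    (hKadd : ∀ a b, dK (a + b) = dK a + dK b)
    (hKmul : ∀ a b, dK (a * b) = dK a * b + a * dK b)
    (hFadd : ∀ a b, dF (a + b) = dF a + dF b)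
    (hFmul : ∀ a b, dF (a * b) = dF a * b + a * dF b)
    (hcompat : ∀ c : K, dF (algebraMap K F c) = algebraMap K F (dK c))
    (hconst : ∀ x : F, dF x = 0 → x ∈ (algebraMap K F).range)
    (n : ℕ) (y : Fin n → F) (hy : ∀ i, y i ≠ 0)
    (a : Fin n → K) (hya : ∀ i, dF (y i) = algebraMap K F (a i) * y i)
    (hmono : ∀ k : Fin n → ℤ, (∃ i, k i ≠ 0) →
      (∏ i, y i ^ k i) ∉ (algebraMap K F).range) :
    AlgebraicIndependent K y := by
  classical
  rw [algebraicIndependent_iff]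
  set φ := algebraMap K F with hφ
  have hdK1 : dK 1 = 0 := aux_d_one dK hKadd hKmul
  set Y : (Fin n →₀ ℕ) → F := fun m => ∏ i, y i ^ m i with hYdef
  set A : (Fin n →₀ ℕ) → K := fun m => ∑ i, (m i : K) * a i with hAdef
  have hYne : ∀ m, Y m ≠ 0 := fun m =>
    Finset.prod_ne_zero_iff.mpr fun i _ => pow_ne_zero _ (hy i)
  have hdY : ∀ m, dF (Y m) = φ (A m) * Y m := by
    intro m
    have h := aux_d_prod dF hFadd hFmul Finset.univ (fun i => y i ^ m i)
      (fun i => (m i : F) * φ (a i)) (fun i _ => aux_d_pow dF hFadd hFmul _ _ (hya i) (m i))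
    rw [hYdef] at *
    rw [h]
    congr 1
    rw [hAdef, map_sum]
    exact Finset.sum_congr rfl fun i _ => by rw [map_mul, map_natCast]
  have haeval : ∀ p : MvPolynomial (Fin n) K,
      MvPolynomial.aeval y p = ∑ m ∈ p.support, φ (p.coeff m) * Y m := by
    intro p
    rw [MvPolynomial.aeval_def, MvPolynomial.eval₂_eq']
  have key : ∀ N (p : MvPolynomial (Fin n) K), p.support.card ≤ N →
      MvPolynomial.aeval y p = 0 → p = 0 := by
    intro N
    induction N with
    | zero =>
        intro p hcard _
        exact MvPolynomial.support_eq_empty.mp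
          (Finset.card_eq_zero.mp (Nat.le_zero.mp hcard))
    | succ N ih =>
        intro p hcard hp0
        by_cases hs0 : p.support = ∅
        · exact MvPolynomial.support_eq_empty.mp hs0
        obtain ⟨m₀, hm₀⟩ := Finset.nonempty_iff_ne_empty.mpr hs0
        have hc₀ : p.coeff m₀ ≠ 0 := MvPolynomial.mem_support_iff.mp hm₀
        set q := MvPolynomial.C (p.coeff m₀)⁻¹ * p with hq
        have hqsupp : q.support = p.support := by
          ext m
          simp [hq, MvPolynomial.mem_support_iff, MvPolynomial.coeff_C_mul,
            mul_ne_zero_iff, inv_ne_zero hc₀]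
        have hq0 : MvPolynomial.aeval y q = 0 := by
          rw [hq, map_mul, MvPolynomial.aeval_C, hp0, mul_zero]
        have hqm₀ : q.coeff m₀ = 1 := by
          rw [hq, MvPolynomial.coeff_C_mul, inv_mul_cancel₀ hc₀]
        have hm₀' : m₀ ∈ q.support := hqsupp ▸ hm₀
        have hS : ∑ m ∈ q.support, φ (q.coeff m) * Y m = 0 := by
          rw [← haeval q]; exact hq0
        have hD : ∑ m ∈ q.support,
            (φ (dK (q.coeff m)) + φ (q.coeff m) * φ (A m)) * Y m = 0 := by
          have h1 : dF (∑ m ∈ q.support, φ (q.coeff m) * Y m) = 0 := by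
            rw [hS]; exact aux_d_zero dF hFadd hFmul
          rw [aux_d_sum dF hFadd hFmul] at h1
          rw [← h1]
          refine Finset.sum_congr rfl fun m _ => ?_
          rw [hFmul, hcompat, hdY]
          ring
        set r : MvPolynomial (Fin n) K :=
          ∑ m ∈ q.support, MvPolynomial.monomial m
            (dK (q.coeff m) + q.coeff m * (A m - A m₀)) with hr
        have hrcoeff : ∀ m', r.coeff m' =
            if m' ∈ q.support then dK (q.coeff m') + q.coeff m' * (A m' - A m₀) else 0 := by
          intro m'
          rw [hr, MvPolynomial.coeff_sum]
          simp only [MvPolynomial.coeff_monomial]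
          rw [Finset.sum_ite_eq' q.support m'
            (fun m => dK (q.coeff m) + q.coeff m * (A m - A m₀))]
        have hraeval : MvPolynomial.aeval y r = 0 := by
          rw [hr, map_sum]
          have heach : ∀ m ∈ q.support,
              MvPolynomial.aeval y (MvPolynomial.monomial m
                (dK (q.coeff m) + q.coeff m * (A m - A m₀)))
              = (φ (dK (q.coeff m)) + φ (q.coeff m) * φ (A m)) * Y m
                - φ (A m₀) * (φ (q.coeff m) * Y m) := by
            intro m _
            have hYm : (∏ i, y i ^ m i) = Y m := rfl
            rw [MvPolynomial.aeval_monomial, Finsupp.prod_pow, ← hφ, hYm]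
            rw [map_add, map_mul, map_sub]
            ring
          rw [Finset.sum_congr rfl heach, Finset.sum_sub_distrib, hD, ← Finset.mul_sum,
            hS, mul_zero, sub_zero]
        have hrsub : r.support ⊂ q.support := by
          constructor
          · intro m hm
            by_contra hnot
            exact (MvPolynomial.mem_support_iff.mp hm) (by rw [hrcoeff m, if_neg hnot])
          · intro hsub
            have h1 := MvPolynomial.mem_support_iff.mp (hsub hm₀')
            apply h1
            rw [hrcoeff m₀, if_pos hm₀', hqm₀, hdK1, sub_self, mul_zero, add_zero]
        have hrcard : r.support.card ≤ N := by
          have h1 := Finset.card_lt_card hrsub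
          have h2 : q.support.card ≤ N + 1 := by rw [hqsupp]; exact hcard
          omega
        have hr0 := ih r hrcard hraeval
        have hzero : ∀ m ∈ q.support,
            dK (q.coeff m) + q.coeff m * (A m - A m₀) = 0 := by
          intro m hm
          have h1 := hrcoeff m
          rw [hr0, MvPolynomial.coeff_zero, if_pos hm] at h1
          exact h1.symm
        exfalso
        have honly : ∀ m ∈ q.support, m = m₀ := by
          intro m hm
          by_contra hne
          have hcm : q.coeff m ≠ 0 := MvPolynomial.mem_support_iff.mp hm
          have hdu : dF (φ (q.coeff m) * (Y m * (Y m₀)⁻¹)) = 0 := by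
            have hinv : dF (Y m₀)⁻¹ = -φ (A m₀) * (Y m₀)⁻¹ :=
              aux_d_inv dF hFadd hFmul _ _ (hYne m₀) (hdY m₀)
            rw [hFmul, hFmul, hcompat, hdY, hinv]
            have h2 : φ (dK (q.coeff m)) + φ (q.coeff m) * (φ (A m) - φ (A m₀)) = 0 := by
              rw [← map_sub, ← map_mul, ← map_add, hzero m hm, map_zero]
            linear_combination (Y m * (Y m₀)⁻¹) * h2
          obtain ⟨b, hb⟩ := hconst _ hdu
          have hYK : Y m * (Y m₀)⁻¹ ∈ (algebraMap K F).range := by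
            refine ⟨b / q.coeff m, ?_⟩
            have hφc : φ (q.coeff m) ≠ 0 := by
              simpa using (map_ne_zero_iff φ (algebraMap K F).injective).mpr hcm
            rw [map_div₀, hb]
            exact mul_div_cancel_left₀ _ hφc
          set k : Fin n → ℤ := fun i => (m i : ℤ) - (m₀ i : ℤ) with hk
          have hkne : ∃ i, k i ≠ 0 := by
            by_contra hz
            push_neg at hz
            apply hne
            ext i
            have h3 := hz i
            rw [hk] at h3
            simp only [sub_eq_zero] at h3
            exact_mod_cast h3
          have hprod : (∏ i, y i ^ k i) = Y m * (Y m₀)⁻¹ := by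
            have hrw : Y m * (Y m₀)⁻¹ = (∏ i, y i ^ m i) * (∏ i, y i ^ m₀ i)⁻¹ := rfl
            rw [hrw, ← Finset.prod_inv_distrib, ← Finset.prod_mul_distrib]
            refine Finset.prod_congr rfl fun i _ => ?_
            rw [hk, zpow_sub₀ (hy i), zpow_natCast, zpow_natCast, div_eq_mul_inv]
          exact hmono k hkne (hprod ▸ hYK)
        have hseq : q.support = {m₀} := Finset.eq_singleton_iff_unique_mem.mpr ⟨hm₀', honly⟩
        rw [hseq, Finset.sum_singleton, hqm₀, map_one, one_mul] at hS
        exact hYne m₀ hS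
  intro p hp
  exact key p.support.card p le_rfl hp
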